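/- Fix p ∈ [0,1], rE > 0, t > 0, and reals r, S_P, and set rP = t·(1+rE). Then the equilibrium loss satisfies the identity L*(p, rE, rP) = [t² / ((1−p)·(1+t)² + p)] · p·(1−p)·(r − S_P)². In particular, L* depends on (rE, rP) only through the relative trust ratio t = rP/(1+rE): any two pairs (rE, rP) and (rE', rP') with rP/(1+rE) = rP'/(1+rE') yield the same equilibrium loss. -/

import Mathlib

lemma key_14 (p rE t : ℝ) (hp0 : 0 ≤ p) (hp1 : p ≤ 1) (hrE : 0 < rE) (ht : 0 < t) :
    p * (1 - p) * (t * (1 + rE)) ^ 2 /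
        ((1 - p) * (1 + rE + t * (1 + rE)) ^ 2 + p * (1 + rE) ^ 2)
      = t ^ 2 / ((1 - p) * (1 + t) ^ 2 + p) * (p * (1 - p)) := by
  have hD : 0 < (1 - p) * (1 + t) ^ 2 + p := by nlinarith [mul_nonneg (sub_nonneg.mpr hp1) (sq_nonneg t), mul_nonneg (sub_nonneg.mpr hp1) ht.le]
  have hE : (0:ℝ) < (1 + rE) ^ 2 := by positivity
  have hden : (1 - p) * (1 + rE + t * (1 + rE)) ^ 2 + p * (1 + rE) ^ 2
      = ((1 - p) * (1 + t) ^ 2 + p) * (1 + rE) ^ 2 := by ring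
  rw [hden]
  field_simp

/-- With `rP = t(1+rE)`, the equilibrium loss equals
`t²/((1-p)(1+t)²+p) · p(1-p)(r-S_P)²`; in particular it depends on `(rE,rP)`
only through the ratio `t = rP/(1+rE)`. -/
theorem stmt_14 (p rE t r S_P : ℝ) (hp : p ∈ Set.Icc (0 : ℝ) 1)
    (hrE : 0 < rE) (ht : 0 < t) :
    (p * (1 - p) * (t * (1 + rE)) ^ 2 /
        ((1 - p) * (1 + rE + t * (1 + rE)) ^ 2 + p * (1 + rE) ^ 2) *
        (r - S_P) ^ 2
      = t ^ 2 / ((1 - p) * (1 + t) ^ 2 + p) * (p * (1 - p) * (r - S_P) ^ 2)) ∧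
    ∀ rE' rP' rE'' rP'' : ℝ, 0 < rE' → 0 < rP' → 0 < rE'' → 0 < rP'' →
      rP' / (1 + rE') = rP'' / (1 + rE'') →
      p * (1 - p) * rP' ^ 2 /
          ((1 - p) * (1 + rE' + rP') ^ 2 + p * (1 + rE') ^ 2) * (r - S_P) ^ 2
        = p * (1 - p) * rP'' ^ 2 /
          ((1 - p) * (1 + rE'' + rP'') ^ 2 + p * (1 + rE'') ^ 2) *
          (r - S_P) ^ 2 := by
  obtain ⟨hp0, hp1⟩ := hp
  constructor
  · rw [key_14 p rE t hp0 hp1 hrE ht]; ring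
  · intro rE' rP' rE'' rP'' h1 h2 h3 h4 heq
    have hE' : (0:ℝ) < 1 + rE' := by linarith
    have hE'' : (0:ℝ) < 1 + rE'' := by linarith
    set s := rP' / (1 + rE') with hs
    have hspos : 0 < s := div_pos h2 hE'
    have e1 : rP' = s * (1 + rE') := by rw [hs, div_mul_cancel₀ _ hE'.ne']
    have e2 : rP'' = s * (1 + rE'') := by
      rw [heq]; field_simp
    rw [e1, e2, key_14 p rE' s hp0 hp1 h1 hspos, key_14 p rE'' s hp0 hp1 h3 hspos]
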